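/- Let A be a positive semidefinite operator on a complex Hilbert space H and T an A-bounded operator. Then dw_A(T) = w_A(T) if and only if AT = 0. -/

import Mathlib

noncomputable section

namespace DW

variable {H : Type*} [NormedAddCommGroup H] [InnerProductSpace ℂ H]

/-- The semi-inner product induced by `A`: `⟨x,y⟩_A = ⟨Ax, y⟩`. -/
def innA (A : H →L[ℂ] H) (x y : H) : ℂ := inner ℂ (A x) y

/-- The seminorm induced by `A`. -/
def normA (A : H →L[ℂ] H) (x : H) : ℝ := Real.sqrt (innA A x x).re

/-- `T` is `A`-bounded. -/
def IsABounded (A T : H →L[ℂ] H) : Prop := ∃ c > 0, ∀ x, normA A (T x) ≤ c * normA A x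

/-- `S` is an `A`-adjoint of `T`. -/
def IsAAdjointPair (A T S : H →L[ℂ] H) : Prop := ∀ x y, innA A (T x) y = innA A x (S y)

/-- The `A`-operator seminorm. -/
def opNormA (A T : H →L[ℂ] H) : ℝ := sSup {r | ∃ x, normA A x = 1 ∧ r = normA A (T x)}

/-- The `A`-minimum modulus. -/
def mA (A T : H →L[ℂ] H) : ℝ := sInf {r | ∃ x, normA A x = 1 ∧ r = normA A (T x)}

/-- The `A`-numerical radius. -/
def wA (A T : H →L[ℂ] H) : ℝ :=
  sSup {r | ∃ x, normA A x = 1 ∧ r = ‖innA A (T x) x‖}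

/-- The `A`-Crawford number. -/
def cA (A T : H →L[ℂ] H) : ℝ :=
  sInf {r | ∃ x, normA A x = 1 ∧ r = ‖innA A (T x) x‖}

/-- The `A`-Davis-Wielandt radius. -/
def dwA (A T : H →L[ℂ] H) : ℝ :=
  sSup {r | ∃ x, normA A x = 1 ∧
    r = Real.sqrt (‖innA A (T x) x‖ ^ 2 + normA A (T x) ^ 4)}

/-- The semi-inner product on `H ⊕ H` induced by `𝔸 = diag(A,A)`. -/
def innA2 (A : H →L[ℂ] H) (z w : H × H) : ℂ := innA A z.1 w.1 + innA A z.2 w.2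

/-- The seminorm on `H ⊕ H` induced by `𝔸 = diag(A,A)`. -/
def normA2 (A : H →L[ℂ] H) (z : H × H) : ℝ := Real.sqrt (innA2 A z z).re

/-- The `𝔸`-numerical radius on `H ⊕ H`, `𝔸 = diag(A,A)`. -/
def wA2 (A : H →L[ℂ] H) (T : H × H →L[ℂ] H × H) : ℝ :=
  sSup {r | ∃ z, normA2 A z = 1 ∧ r = ‖innA2 A (T z) z‖}

/-- The `𝔸`-Davis-Wielandt radius on `H ⊕ H`, `𝔸 = diag(A,A)`. -/
def dwA2 (A : H →L[ℂ] H) (T : H × H →L[ℂ] H × H) : ℝ :=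
  sSup {r | ∃ z, normA2 A z = 1 ∧
    r = Real.sqrt (‖innA2 A (T z) z‖ ^ 2 + normA2 A (T z) ^ 4)}

/-- The block operator `[[0, X], [Y, 0]]` on `H ⊕ H`. -/
def offDiag (X Y : H →L[ℂ] H) : H × H →L[ℂ] H × H :=
  (X.comp (ContinuousLinearMap.snd ℂ H H)).prod (Y.comp (ContinuousLinearMap.fst ℂ H H))

end DW

open DW

variable {H : Type*} [NormedAddCommGroup H] [InnerProductSpace ℂ H] [CompleteSpace H]


section Aux

variable (A : H →L[ℂ] H)

/-- The pre-inner-product core induced by a positive operator. -/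
def coreA (hA : A.IsPositive) : PreInnerProductSpace.Core ℂ H where
  inner x y := innA A x y
  conj_inner_symm x y := by
    simp only [innA]
    rw [inner_conj_symm]
    exact (hA.isSelfAdjoint.isSymmetric x y).symm
  re_inner_nonneg x := hA.2 x
  add_left x y z := by simp [innA, map_add, inner_add_left]
  smul_left x y r := by simp [innA, map_smul, inner_smul_left, mul_comm]

lemma normA_nonneg (x : H) : 0 ≤ normA A x := Real.sqrt_nonneg _

lemma normA_sq (hA : A.IsPositive) (x : H) : normA A x ^ 2 = (innA A x x).re :=
  Real.sq_sqrt (hA.2 x)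

/-- Cauchy–Schwarz for the semi-inner product. -/
lemma csA (hA : A.IsPositive) (x y : H) :
    ‖innA A x y‖ ≤ normA A x * normA A y := by
  have h := InnerProductSpace.Core.inner_mul_inner_self_le (𝕜 := ℂ) (c := coreA A hA) x y
  have hconj : (starRingEnd ℂ) (innA A y x) = innA A x y := (coreA A hA).conj_inner_symm x y
  have hsym : ‖innA A y x‖ = ‖innA A x y‖ := by
    rw [← hconj, RCLike.norm_conj]
  change ‖innA A x y‖ * ‖innA A y x‖ ≤ RCLike.re (innA A x x) * RCLike.re (innA A y y) at h
  rw [hsym, ← sq] at h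
  have h2 : ‖innA A x y‖ ^ 2 ≤ (normA A x * normA A y) ^ 2 := by
    rw [mul_pow, normA_sq A hA, normA_sq A hA]
    exact h
  calc ‖innA A x y‖ = ‖innA A x y‖ := rfl
    _ ≤ normA A x * normA A y := by
      nlinarith [norm_nonneg (innA A x y), mul_nonneg (normA_nonneg A x) (normA_nonneg A y)]

/-- If the seminorm of `y` vanishes then `A y = 0`. -/
lemma normA_eq_zero (hA : A.IsPositive) {y : H} (h : normA A y = 0) : A y = 0 := by
  have hre : (innA A y y).re = 0 := by
    have := Real.sqrt_eq_zero (hA.2 y) |>.mp h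
    exact this
  have key : ∀ z : H, innA A y z = 0 := by
    intro z
    have h := InnerProductSpace.Core.inner_mul_inner_self_le (𝕜 := ℂ) (c := coreA A hA) y z
    change ‖innA A y z‖ * ‖innA A z y‖ ≤ RCLike.re (innA A y y) * RCLike.re (innA A z z) at h
    have hconj : (starRingEnd ℂ) (innA A z y) = innA A y z := (coreA A hA).conj_inner_symm y z
    have hsym : ‖innA A z y‖ = ‖innA A y z‖ := by
      rw [← hconj, RCLike.norm_conj]
    rw [hsym, ← sq] at h
    have hyy : RCLike.re (innA A y y) = 0 := hre
    rw [hyy, zero_mul] at h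
    have := sq_nonneg ‖innA A y z‖
    have hz : ‖innA A y z‖ = 0 := by nlinarith [norm_nonneg (innA A y z)]
    exact norm_eq_zero.mp hz
  have := key (A y)
  simp only [innA] at this
  exact inner_self_eq_zero.mp this

lemma normA_smul (a : ℂ) (x : H) : normA A (a • x) = ‖a‖ * normA A x := by
  have : innA A (a • x) (a • x) = (‖a‖ ^ 2 : ℝ) * innA A x x := by
    simp only [innA, map_smul, inner_smul_left, inner_smul_right]
    rw [← mul_assoc, Complex.mul_conj, ← Complex.sq_norm]
  simp only [normA, this]
  rw [Complex.re_ofReal_mul, Real.sqrt_mul (by positivity)]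
  congr 1
  rw [Real.sqrt_sq (by positivity)]

end Aux

theorem stmt1 (A T : H →L[ℂ] H) (hA : A.IsPositive) (hT : IsABounded A T) :
    dwA A T = wA A T ↔ A.comp T = 0 := by
  obtain ⟨c, hc, hbound⟩ := hT
  by_cases hne : ∃ x : H, normA A x = 1
  · obtain ⟨x₀, hx₀⟩ := hne
    -- basic bounds
    have habs : ∀ x : H, normA A x = 1 →
        ‖innA A (T x) x‖ ≤ normA A (T x) := by
      intro x hx
      calc ‖innA A (T x) x‖ ≤ normA A (T x) * normA A x := csA A hA _ _
        _ = normA A (T x) := by rw [hx, mul_one]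
    have hTb : ∀ x : H, normA A x = 1 → normA A (T x) ≤ c := by
      intro x hx
      calc normA A (T x) ≤ c * normA A x := hbound x
        _ = c := by rw [hx, mul_one]
    have hbddW : BddAbove {r | ∃ x, normA A x = 1 ∧ r = ‖innA A (T x) x‖} := by
      refine ⟨c, fun r hr => ?_⟩
      obtain ⟨x, hx, rfl⟩ := hr
      exact (habs x hx).trans (hTb x hx)
    have hbddDW : BddAbove {r | ∃ x, normA A x = 1 ∧
        r = Real.sqrt (‖innA A (T x) x‖ ^ 2 + normA A (T x) ^ 4)} := by
      refine ⟨Real.sqrt (c ^ 2 + c ^ 4), fun r hr => ?_⟩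
      obtain ⟨x, hx, rfl⟩ := hr
      apply Real.sqrt_le_sqrt
      have h1 := (habs x hx).trans (hTb x hx)
      have h2 := hTb x hx
      have h3 := norm_nonneg (innA A (T x) x)
      have h4 := normA_nonneg A (T x)
      have h5 := pow_le_pow_left₀ h3 h1 2
      have h6 := pow_le_pow_left₀ h4 h2 4
      linarith
    have hW0 : 0 ≤ wA A T := by
      refine le_trans (norm_nonneg (innA A (T x₀) x₀)) ?_
      exact le_csSup hbddW ⟨x₀, hx₀, rfl⟩
    constructor
    · -- forward direction
      intro hEq
      -- every point value is ≤ wA²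
      have hpt : ∀ x : H, normA A x = 1 →
          ‖innA A (T x) x‖ ^ 2 + normA A (T x) ^ 4 ≤ wA A T ^ 2 := by
        intro x hx
        have h1 : Real.sqrt (‖innA A (T x) x‖ ^ 2 + normA A (T x) ^ 4)
            ≤ wA A T := by
          rw [← hEq]
          exact le_csSup hbddDW ⟨x, hx, rfl⟩
        have hnn : 0 ≤ ‖innA A (T x) x‖ ^ 2 + normA A (T x) ^ 4 := by positivity
        calc ‖innA A (T x) x‖ ^ 2 + normA A (T x) ^ 4
            = Real.sqrt (‖innA A (T x) x‖ ^ 2 + normA A (T x) ^ 4) ^ 2 := by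
              rw [Real.sq_sqrt hnn]
          _ ≤ wA A T ^ 2 := by
              have := Real.sqrt_nonneg (‖innA A (T x) x‖ ^ 2 + normA A (T x) ^ 4)
              nlinarith
      -- wA = 0
      have hw : wA A T = 0 := by
        by_contra hne0
        have hwpos : 0 < wA A T := lt_of_le_of_ne hW0 (Ne.symm hne0)
        set w := wA A T with hwdef
        set ε := min (w / 2) (w ^ 3 / 100) with hε
        have hεpos : 0 < ε := lt_min (by linarith) (by positivity)
        have hε1 : ε ≤ w / 2 := min_le_left _ _
        have hε2 : ε ≤ w ^ 3 / 100 := min_le_right _ _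
        have hlt : w - ε < wA A T := by linarith
        have hmem : ‖innA A (T x₀) x₀‖ ∈
            {r | ∃ x : H, normA A x = 1 ∧ r = ‖innA A (T x) x‖} := ⟨x₀, hx₀, rfl⟩
        obtain ⟨r, hrS, hrgt⟩ := exists_lt_of_lt_csSup (Set.nonempty_of_mem hmem) hlt
        obtain ⟨x, hx, rfl⟩ := hrS
        have hr1 : ‖innA A (T x) x‖ ≤ normA A (T x) := habs x hx
        have hr2 : ‖innA A (T x) x‖ ^ 2 + normA A (T x) ^ 4 ≤ w ^ 2 := hpt x hx
        have hr3 : ‖innA A (T x) x‖ ≤ w := le_csSup hbddW ⟨x, hx, rfl⟩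
        have hr0 : 0 ≤ ‖innA A (T x) x‖ := norm_nonneg _
        have hn0 : 0 ≤ normA A (T x) := normA_nonneg A _
        set r := ‖innA A (T x) x‖ with hrdef
        set n := normA A (T x) with hndef
        -- derive contradiction
        have hhalf : w / 2 ≤ w - ε := by linarith
        have hrhalf : w / 2 < r := by linarith
        have ha : (w / 2) ^ 2 < r ^ 2 := by nlinarith
        have h4 : (w / 2) ^ 4 < r ^ 4 := by
          nlinarith [mul_pos (sub_pos.mpr ha) (show (0:ℝ) < r ^ 2 + (w / 2) ^ 2 by positivity)]
        have h5 : r ^ 4 ≤ n ^ 4 := by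
          have := pow_le_pow_left₀ hr0 hr1 4
          exact this
        have h6 : n ^ 4 ≤ 2 * w * ε := by
          nlinarith [mul_pos (sub_pos.mpr hrgt) (show (0:ℝ) < r + (w - ε) by linarith),
            sq_nonneg ε]
        have h7 : 2 * w * ε ≤ w ^ 4 / 50 := by
          nlinarith [mul_le_mul_of_nonneg_left hε2 (show (0:ℝ) ≤ 2 * w by linarith)]
        have hw4 : 0 < w ^ 4 := by positivity
        have he : (w / 2) ^ 4 = w ^ 4 / 16 := by ring
        linarith
      -- all seminorms of T x vanish
      have hTzero : ∀ x : H, normA A (T x) = 0 := by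
        intro x
        by_cases hxz : normA A x = 0
        · have := hbound x
          rw [hxz, mul_zero] at this
          exact le_antisymm this (normA_nonneg A _)
        · have hxpos : 0 < normA A x := lt_of_le_of_ne (normA_nonneg A x) (Ne.symm hxz)
          set u := ((normA A x)⁻¹ : ℂ) • x with hu
          have hunorm : normA A u = 1 := by
            rw [hu, normA_smul]
            rw [norm_inv]
            rw [Complex.norm_real, Real.norm_eq_abs, abs_of_pos hxpos]
            field_simp
          have hval := hpt u hunorm
          rw [hw] at hval
          have h4 : normA A (T u) ^ 4 ≤ 0 := by
            have := sq_nonneg (‖innA A (T u) u‖)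
            nlinarith
          have hTu : normA A (T u) = 0 := by
            by_contra hne'
            have hpos : 0 < normA A (T u) :=
              lt_of_le_of_ne (normA_nonneg A _) (Ne.symm hne')
            have : 0 < normA A (T u) ^ 4 := by positivity
            linarith
          have hTux : T u = ((normA A x)⁻¹ : ℂ) • T x := by
            rw [hu, map_smul]
          rw [hTux, normA_smul] at hTu
          have : ‖((normA A x)⁻¹ : ℂ)‖ ≠ 0 := by
            rw [norm_inv, Complex.norm_real, Real.norm_eq_abs, abs_of_pos hxpos]
            positivity
          have := mul_eq_zero.mp hTu
          rcases this with h | h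
          · exact absurd h ‹‖((normA A x)⁻¹ : ℂ)‖ ≠ 0›
          · exact h
      ext x
      simp only [ContinuousLinearMap.comp_apply, ContinuousLinearMap.zero_apply]
      exact normA_eq_zero A hA (hTzero x)
    · -- backward direction
      intro hAT
      have hz : ∀ x : H, A (T x) = 0 := by
        intro x
        have := congrArg (fun S : H →L[ℂ] H => S x) hAT
        simpa using this
      have hset1 : ∀ x : H, innA A (T x) x = 0 := by
        intro x; simp [innA, hz x]
      have hset2 : ∀ x : H, normA A (T x) = 0 := by
        intro x; simp [normA, innA, hz x]
      unfold dwA wA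
      congr 1
      ext r
      constructor
      · rintro ⟨x, hx, rfl⟩
        exact ⟨x, hx, by rw [hset1 x, hset2 x]; simp⟩
      · rintro ⟨x, hx, rfl⟩
        exact ⟨x, hx, by rw [hset1 x, hset2 x]; simp⟩
  · -- degenerate case: no unit vectors
    push_neg at hne
    have hzero : ∀ x : H, normA A x = 0 := by
      intro x
      by_contra hxz
      have hxpos : 0 < normA A x := lt_of_le_of_ne (normA_nonneg A x) (Ne.symm hxz)
      apply hne (((normA A x)⁻¹ : ℂ) • x)
      rw [normA_smul, norm_inv, Complex.norm_real, Real.norm_eq_abs, abs_of_pos hxpos]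
      field_simp
    have hAT : A.comp T = 0 := by
      ext x
      simp only [ContinuousLinearMap.comp_apply, ContinuousLinearMap.zero_apply]
      apply normA_eq_zero A hA
      have := hbound x
      rw [hzero x, mul_zero] at this
      exact le_antisymm this (normA_nonneg A _)
    have hdw : dwA A T = wA A T := by
      unfold dwA wA
      have h1 : {r | ∃ x : H, normA A x = 1 ∧
          r = Real.sqrt (‖innA A (T x) x‖ ^ 2 + normA A (T x) ^ 4)} = ∅ := by
        ext r; simp only [Set.mem_setOf_eq, Set.mem_empty_iff_false, iff_false]
        rintro ⟨x, hx, _⟩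
        exact absurd hx (by rw [hzero x]; norm_num)
      have h2 : {r | ∃ x : H, normA A x = 1 ∧
          r = ‖innA A (T x) x‖} = ∅ := by
        ext r; simp only [Set.mem_setOf_eq, Set.mem_empty_iff_false, iff_false]
        rintro ⟨x, hx, _⟩
        exact absurd hx (by rw [hzero x]; norm_num)
      rw [h1, h2]
    exact ⟨fun _ => hAT, fun _ => hdw⟩
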